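/- arXiv:2511.02883 — 2 statements merged into one kernel-verified Lean document; each statement's English description precedes it below -/
import Mathlib

section
/- Let m and k be positive integers and let μ_1, …, μ_k be real numbers. Then ∑_{p ⊢ m} ((2|[p]|−1)!! / (−2)^{|[p]|}) · (1/[p]!) · e_p(μ_1, …, μ_k) = (1 / ((−2)^m m!)) · ∑_{q ⊢ m} (m choose q) · (2q−1)!! · m_q(μ_1, …, μ_k), where (m choose q) = m!/∏_i q_i! is the multinomial coefficient, (2q−1)!! = ∏_i (2q_i − 1)!!, and the sums range over all integer partitions p, respectively q, of m. -/
open Finset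

/-- Falling factorial of a real number: `x (x-1) ⋯ (x-n+1)`. -/
def fallFac (x : ℝ) (n : ℕ) : ℝ := ∏ i ∈ Finset.range n, (x - i)

/-- `[p]!`: the product of the factorials of the multiplicities of the parts of `p`. -/
def multFact {m : ℕ} (p : Nat.Partition m) : ℕ :=
  ∏ i ∈ p.parts.toFinset, Nat.factorial (p.parts.count i)

/-- The parts of a partition, as a list, sorted in decreasing order. -/
def partsList {m : ℕ} (p : Nat.Partition m) : List ℕ := p.parts.sort (· ≥ ·)

/-- `N(p,q)`: the number of `|[p]| × |[q]|` binary matrices whose row sums are given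
by `p` and whose column sums are given by `q`. -/
noncomputable def Nmat {m : ℕ} (p q : Nat.Partition m) : ℕ :=
  Nat.card {M : Matrix (Fin (Multiset.card p.parts)) (Fin (Multiset.card q.parts)) Bool //
    (∀ i, (∑ j, if M i j then 1 else 0) = (partsList p).getD i 0) ∧
    (∀ j, (∑ i, if M i j then 1 else 0) = (partsList q).getD j 0)}

/-- The double factorial `(2n-1)!! = 1 · 3 · 5 ⋯ (2n-1)` (with `(-1)!! = 1` for `n = 0`). -/
def oddDoubleFac (n : ℕ) : ℕ := ∏ i ∈ Finset.range n, (2 * i + 1)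

/-- The `j`-th elementary symmetric polynomial evaluated at `μ 0, …, μ (k-1)`
(it vanishes for `j > k`). -/
def esym (k j : ℕ) (μ : Fin k → ℝ) : ℝ :=
  ∑ s ∈ Finset.powersetCard j (Finset.univ : Finset (Fin k)), ∏ i ∈ s, μ i

/-- The monomial symmetric function `m_q` evaluated at `μ 0, …, μ (k-1)`: the sum of all
distinct monomials `μ^α` over exponent vectors `α` whose multiset of non-zero entries is
the multiset of parts of `q`. -/
def msym {m : ℕ} (k : ℕ) (q : Nat.Partition m) (μ : Fin k → ℝ) : ℝ :=
  ∑ α ∈ (Finset.Nat.antidiagonalTuple k m).filter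
      (fun α => Multiset.filter (· ≠ 0) (Multiset.map α (Finset.univ : Finset (Fin k)).val)
        = q.parts),
    ∏ i, μ i ^ α i


lemma fallFac_succ (x : ℝ) (n : ℕ) : fallFac x (n+1) = fallFac x n * (x - n) := by
  simp [fallFac, Finset.prod_range_succ]

lemma fallFac_nat (n a : ℕ) : fallFac n a = (Nat.factorial a : ℝ) * (n.choose a) := by
  induction a with
  | zero => simp [fallFac]
  | succ a ih =>
    rcases le_or_gt a n with h | h
    · have hc : n.choose (a+1) * (a+1) = n.choose a * (n - a) := Nat.choose_succ_right_eq n a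
      have hcast : ((n - a : ℕ) : ℝ) = (n : ℝ) - a := by
        push_cast [Nat.cast_sub h]; ring
      rw [fallFac_succ, ih]
      have : ((n.choose (a+1) : ℝ)) * (a+1) = (n.choose a : ℝ) * ((n:ℝ) - a) := by
        rw [← hcast]; exact_mod_cast congrArg (Nat.cast : ℕ → ℝ) hc
      rw [Nat.factorial_succ]
      push_cast
      nlinarith [this]
    · have h1 : fallFac n (a+1) = 0 := by
        apply Finset.prod_eq_zero (Finset.mem_range.2 (Nat.lt_succ_of_lt h))
        simp
      have h2 : n.choose (a+1) = 0 := Nat.choose_eq_zero_of_lt (by omega)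
      rw [h1, h2]; simp

lemma oddDoubleFac_cast (a : ℕ) : (oddDoubleFac a : ℝ) = fallFac (-1/2) a * (-2)^a := by
  induction a with
  | zero => simp [oddDoubleFac, fallFac]
  | succ a ih =>
    have : oddDoubleFac (a+1) = oddDoubleFac a * (2*a+1) := by
      simp [oddDoubleFac, Finset.prod_range_succ]
    rw [this, fallFac_succ]
    push_cast [ih]
    ring

def Tup (k l : ℕ) (α : Fin k → ℕ) : Finset (Fin l → Finset (Fin k)) :=
  Finset.univ.filter fun S =>
    (∀ j, S j ≠ ∅) ∧ ∀ i, #(Finset.univ.filter fun j => i ∈ S j) = α i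

def Ncnt (k l : ℕ) (α : Fin k → ℕ) : ℕ := (Tup k l α).card

lemma sum_card_filter_mem {k l : ℕ} (S : Fin l → Finset (Fin k)) :
    ∑ i, #(Finset.univ.filter fun j => i ∈ S j) = ∑ j, #(S j) := by
  simp only [Finset.card_filter]
  rw [Finset.sum_comm]
  congr 1; ext j
  rw [Finset.sum_ite_mem]
  simp

lemma Ncnt_eq_zero {k l m : ℕ} {α : Fin k → ℕ} (hα : ∑ i, α i = m) (h : m < l) :
    Ncnt k l α = 0 := by
  rw [Ncnt, Finset.card_eq_zero, Finset.eq_empty_iff_forall_notMem]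
  intro S hS
  rw [Tup, Finset.mem_filter] at hS
  obtain ⟨-, hne, hcnt⟩ := hS
  have h1 : ∀ j, 1 ≤ #(S j) := fun j =>
    Finset.card_pos.2 (Finset.nonempty_iff_ne_empty.2 (hne j))
  have h2 : l ≤ m := by
    calc l = ∑ _j : Fin l, 1 := by simp
    _ ≤ ∑ j, #(S j) := Finset.sum_le_sum (fun j _ => h1 j)
    _ = ∑ i, α i := by rw [← sum_card_filter_mem]; exact Finset.sum_congr rfl fun i _ => hcnt i
    _ = m := hα
  omega

lemma card_G (n k : ℕ) (α : Fin k → ℕ) :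
    #(Finset.univ.filter fun g : Fin n → Finset (Fin k) =>
        ∀ i, #(Finset.univ.filter fun j => i ∈ g j) = α i) = ∏ i, n.choose (α i) := by
  have hcard : ∏ i, n.choose (α i) =
      #(Fintype.piFinset fun i : Fin k =>
        Finset.powersetCard (α i) (Finset.univ : Finset (Fin n))) := by
    simp [Finset.card_powersetCard]
  rw [hcard]
  refine Finset.card_bij' (fun g _ => fun i => Finset.univ.filter fun j => i ∈ g j)
    (fun T _ => fun j => Finset.univ.filter fun i => j ∈ T i) ?hi ?hj ?left ?right
  case hi =>
    intro g hg
    rw [Finset.mem_filter] at hg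
    rw [Fintype.mem_piFinset]
    intro i
    rw [Finset.mem_powersetCard]
    exact ⟨Finset.subset_univ _, hg.2 i⟩
  case hj =>
    intro T hT
    simp only [Finset.mem_filter, Finset.mem_univ, true_and]
    intro i
    rw [Fintype.mem_piFinset] at hT
    have h1 := hT i
    rw [Finset.mem_powersetCard] at h1
    have h2 : (Finset.univ.filter fun j : Fin n => j ∈ T i) = T i := by
      ext j; simp
    rw [h2, h1.2]
  case left => intro g _; funext j; ext i; simp
  case right => intro T _; funext i; ext j; simp

lemma filter_card_transfer {n k : ℕ} (s : Finset (Fin n)) (g : Fin n → Finset (Fin k))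
    (hsupp : ∀ j, g j ≠ ∅ → j ∈ s) (i : Fin k) :
    #(Finset.univ.filter fun j : Fin #s => i ∈ g (s.orderIsoOfFin rfl j)) =
    #(Finset.univ.filter fun j : Fin n => i ∈ g j) := by
  apply Finset.card_bij (fun j _ => ((s.orderIsoOfFin rfl j : {x // x ∈ s}) : Fin n))
  · intro j hj
    simp only [Finset.mem_filter, Finset.mem_univ, true_and] at hj ⊢
    exact hj
  · intro j1 _ j2 _ heq
    exact (s.orderIsoOfFin rfl).injective (Subtype.coe_injective heq)
  · intro j' hj'
    simp only [Finset.mem_filter, Finset.mem_univ, true_and] at hj'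
    have hjs : j' ∈ s := hsupp j' (fun h0 => by rw [h0] at hj'; simp at hj')
    refine ⟨(s.orderIsoOfFin rfl).symm ⟨j', hjs⟩, ?_, ?_⟩
    · simp only [Finset.mem_filter, Finset.mem_univ, true_and, OrderIso.apply_symm_apply]
      exact hj'
    · simp

lemma fiber_card {n k : ℕ} (α : Fin k → ℕ) (s : Finset (Fin n)) :
    #((Finset.univ.filter fun g : Fin n → Finset (Fin k) =>
        ∀ i, #(Finset.univ.filter fun j => i ∈ g j) = α i).filter
        fun g => (Finset.univ.filter fun j => g j ≠ ∅) = s) = Ncnt k #s α := by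
  rw [Ncnt, Tup]
  refine Finset.card_bij' (fun g _ => fun j : Fin #s => g (s.orderIsoOfFin rfl j))
    (fun S _ => fun j : Fin n => if h : j ∈ s then S ((s.orderIsoOfFin rfl).symm ⟨j, h⟩) else ∅)
    ?hi ?hj ?left ?right
  case hi =>
    intro g hg
    rw [Finset.mem_filter, Finset.mem_filter] at hg
    obtain ⟨⟨-, hcnt⟩, hsupp⟩ := hg
    have hmem : ∀ j, g j ≠ ∅ ↔ j ∈ s := by
      intro j
      rw [← hsupp]; simp
    rw [Finset.mem_filter]
    refine ⟨Finset.mem_univ _, fun j => (hmem _).2 (s.orderIsoOfFin rfl j).2, fun i => ?_⟩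
    rw [filter_card_transfer s g (fun j hj => (hmem j).1 hj) i]
    exact hcnt i
  case hj =>
    intro S hS
    rw [Finset.mem_filter] at hS
    obtain ⟨-, hne, hcnt⟩ := hS
    set g : Fin n → Finset (Fin k) :=
      fun j => if h : j ∈ s then S ((s.orderIsoOfFin rfl).symm ⟨j, h⟩) else ∅ with hgdef
    have hsupp : ∀ j, g j ≠ ∅ → j ∈ s := by
      intro j hj
      by_contra h
      apply hj
      simp [hgdef, h]
    have hval : ∀ j : Fin #s, g (s.orderIsoOfFin rfl j) = S j := by
      intro j
      have h2 := (s.orderIsoOfFin rfl j).2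
      simp only [hgdef, dif_pos h2]
      congr 1
      have : (⟨((s.orderIsoOfFin rfl j : {x // x ∈ s}) : Fin n), h2⟩ : {x // x ∈ s})
          = s.orderIsoOfFin rfl j := Subtype.ext rfl
      rw [this, OrderIso.symm_apply_apply]
    rw [Finset.mem_filter, Finset.mem_filter]
    refine ⟨⟨Finset.mem_univ _, fun i => ?_⟩, ?_⟩
    · rw [← filter_card_transfer s g hsupp i]
      rw [Finset.filter_congr (fun j _ => by rw [hval j])]
      exact hcnt i
    · ext j
      simp only [Finset.mem_filter, Finset.mem_univ, true_and]
      constructor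
      · exact hsupp j
      · intro hj
        simp only [hgdef, dif_pos hj]
        exact hne _
  case left =>
    intro g hg
    rw [Finset.mem_filter] at hg
    obtain ⟨-, hsupp⟩ := hg
    funext j
    by_cases h : j ∈ s
    · simp only [dif_pos h]
      congr 1
      exact congrArg _ (OrderIso.apply_symm_apply _ _)
    · simp only [dif_neg h]
      have hz : g j = ∅ := by
        by_contra hne'
        exact h (by rw [← hsupp]; simp [hne'])
      exact hz.symm 
  case right =>
    intro S hS
    funext j
    have h2 := (s.orderIsoOfFin rfl j).2
    simp only [dif_pos h2]
    congr 1
    have : (⟨((s.orderIsoOfFin rfl j : {x // x ∈ s}) : Fin n), h2⟩ : {x // x ∈ s})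
        = s.orderIsoOfFin rfl j := Subtype.ext rfl
    rw [this, OrderIso.symm_apply_apply]

lemma count_identity (n k : ℕ) (α : Fin k → ℕ) :
    ∏ i, n.choose (α i) = ∑ l ∈ Finset.range (n+1), n.choose l * Ncnt k l α := by
  rw [← card_G]
  rw [Finset.card_eq_sum_card_fiberwise
      (f := fun g : Fin n → Finset (Fin k) => Finset.univ.filter fun j => g j ≠ ∅)
      (t := (Finset.univ : Finset (Fin n)).powerset)
      (fun g _ => Finset.mem_powerset.2 (Finset.subset_univ _))]
  rw [Finset.sum_congr rfl (fun s _ => fiber_card α s)]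
  rw [Finset.sum_powerset_apply_card (fun c => Ncnt k c α)]
  simp [Finset.card_univ]

noncomputable def fallPoly (a : ℕ) : Polynomial ℝ :=
  ∏ t ∈ Finset.range a, (Polynomial.X - Polynomial.C (t : ℝ))

lemma fallPoly_eval (x : ℝ) (a : ℕ) : (fallPoly a).eval x = fallFac x a := by
  simp [fallPoly, fallFac, Polynomial.eval_prod]

lemma newton {k m : ℕ} (α : Fin k → ℕ) (hα : ∑ i, α i = m) :
    ∑ l ∈ Finset.range (m+1), (Ncnt k l α : ℝ) / (Nat.factorial l : ℝ) * fallFac (-1/2) l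
      = ∏ i, (fallFac (-1/2) (α i) / ((α i).factorial : ℝ)) := by
  set P : Polynomial ℝ :=
    (∏ i, Polynomial.C ((((α i).factorial : ℝ))⁻¹) * fallPoly (α i))
    - ∑ l ∈ Finset.range (m+1),
        Polynomial.C ((Ncnt k l α : ℝ) / (Nat.factorial l : ℝ)) * fallPoly l with hP
  have heval : ∀ x : ℝ, P.eval x =
      (∏ i, fallFac x (α i) / ((α i).factorial : ℝ)) -
        ∑ l ∈ Finset.range (m+1), (Ncnt k l α : ℝ) / (Nat.factorial l : ℝ) * fallFac x l := by
    intro x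
    rw [hP]
    rw [Polynomial.eval_sub, Polynomial.eval_prod, Polynomial.eval_finset_sum]
    congr 1
    · apply Finset.prod_congr rfl
      intro i _
      rw [Polynomial.eval_mul, Polynomial.eval_C, fallPoly_eval]
      rw [div_eq_inv_mul]
    · apply Finset.sum_congr rfl
      intro l _
      rw [Polynomial.eval_mul, Polynomial.eval_C, fallPoly_eval]
  have hroot : ∀ j : ℕ, P.eval ((m + j : ℕ) : ℝ) = 0 := by
    intro j
    set n := m + j with hn
    have hcnt := count_identity n k α
    have hsub : ∑ l ∈ Finset.range (n+1), n.choose l * Ncnt k l α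
        = ∑ l ∈ Finset.range (m+1), n.choose l * Ncnt k l α := by
      symm
      apply Finset.sum_subset
      · intro x hx; simp only [Finset.mem_range] at hx ⊢; omega
      · intro x hx hnx
        simp only [Finset.mem_range] at hx hnx
        rw [Ncnt_eq_zero hα (by omega), mul_zero]
    rw [heval, sub_eq_zero]
    have hL : (∏ i, fallFac (n : ℝ) (α i) / ((α i).factorial : ℝ))
        = ((∏ i, n.choose (α i) : ℕ) : ℝ) := by
      push_cast
      apply Finset.prod_congr rfl
      intro i _
      rw [fallFac_nat]
      rw [mul_comm, mul_div_assoc, div_self (by exact_mod_cast (α i).factorial_ne_zero), mul_one]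
    have hR : ∑ l ∈ Finset.range (m+1), (Ncnt k l α : ℝ) / (Nat.factorial l : ℝ) * fallFac (n : ℝ) l
        = ((∑ l ∈ Finset.range (m+1), n.choose l * Ncnt k l α : ℕ) : ℝ) := by
      push_cast
      apply Finset.sum_congr rfl
      intro l _
      rw [fallFac_nat]
      field_simp
    rw [hL, hR, hcnt, hsub]
  have hP0 : P = 0 := by
    apply Polynomial.eq_zero_of_infinite_isRoot
    apply Set.infinite_of_injective_forall_mem
      (f := fun j : ℕ => ((m + j : ℕ) : ℝ))
    · intro a b hab
      have : ((m + a : ℕ) : ℝ) = ((m + b : ℕ) : ℝ) := hab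
      have := Nat.cast_injective this
      omega
    · intro j
      exact hroot j
  have := heval (-1/2)
  rw [hP0] at this
  simp only [Polynomial.eval_zero] at this
  linarith [this]

def Fl (l : ℕ) (p : Multiset ℕ) : Finset (Fin l → ℕ) :=
  (Fintype.piFinset fun _ : Fin l => p.toFinset).filter
    fun a => Multiset.map a Finset.univ.val = p

lemma map_univ_succ {l : ℕ} (a : Fin (l+1) → ℕ) :
    Multiset.map a (Finset.univ : Finset (Fin (l+1))).val
      = a (Fin.last l) ::ₘ Multiset.map (fun j : Fin l => a j.castSucc) Finset.univ.val := by
  rw [Fin.univ_castSuccEmb, Finset.cons_val, Multiset.map_cons, Finset.map_val,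
    Multiset.map_map]
  congr 1

lemma prod_count_fact_cons (v : ℕ) (q : Multiset ℕ) :
    ∏ i ∈ (v ::ₘ q).toFinset, ((v ::ₘ q).count i).factorial
      = (q.count v + 1) * ∏ i ∈ q.toFinset, (q.count i).factorial := by
  by_cases hv : v ∈ q.toFinset
  · have h1 : (v ::ₘ q).toFinset = q.toFinset := by
      rw [Multiset.toFinset_cons, Finset.insert_eq_self.2 hv]
    rw [h1]
    rw [← Finset.mul_prod_erase _ _ hv, ← Finset.mul_prod_erase _ (fun i => (q.count i).factorial) hv]
    have h2 : ∀ i ∈ q.toFinset.erase v, ((v ::ₘ q).count i).factorial = (q.count i).factorial := by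
      intro i hi
      rw [Multiset.count_cons_of_ne (Finset.ne_of_mem_erase hi) ]
    rw [Finset.prod_congr rfl h2, Multiset.count_cons_self, Nat.factorial_succ]
    ring
  · have h0 : q.count v = 0 :=
      Multiset.count_eq_zero.2 (fun h => hv (Multiset.mem_toFinset.2 h))
    rw [Multiset.toFinset_cons, Finset.prod_insert hv]
    have h2 : ∀ i ∈ q.toFinset, ((v ::ₘ q).count i).factorial = (q.count i).factorial := by
      intro i hi
      rw [Multiset.count_cons_of_ne (fun h => hv (by rwa [← h]))]
    rw [Finset.prod_congr rfl h2, Multiset.count_cons_self, h0]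
    simp [Nat.factorial]

lemma Fl_card : ∀ (l : ℕ) (p : Multiset ℕ), Multiset.card p = l →
    #(Fl l p) * ∏ i ∈ p.toFinset, (p.count i).factorial = Nat.factorial l := by
  intro l
  induction l with
  | zero =>
    intro p hp
    rw [Multiset.card_eq_zero] at hp
    subst hp
    have : Fl 0 0 = Fintype.piFinset fun _ : Fin 0 => (0 : Multiset ℕ).toFinset := by
      rw [Fl]
      apply Finset.filter_true_of_mem
      intro a _
      simp
    rw [this]
    simp
  | succ l ih =>
    intro p hp
    have hfib : #(Fl (l+1) p) = ∑ v ∈ p.toFinset, #((Fl (l+1) p).filter fun a => a (Fin.last l) = v) := by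
      apply Finset.card_eq_sum_card_fiberwise
      intro a ha
      rw [Finset.mem_coe, Fl, Finset.mem_filter, Fintype.mem_piFinset] at ha
      exact ha.1 _
    have hstep : ∀ v ∈ p.toFinset,
        #((Fl (l+1) p).filter fun a => a (Fin.last l) = v) = #(Fl l (p.erase v)) := by
      intro v hv
      have hvp : v ∈ p := Multiset.mem_toFinset.1 hv
      refine Finset.card_bij' (fun a _ => fun j : Fin l => a j.castSucc)
        (fun b _ => Fin.snoc b v) ?hi ?hj ?left ?right
      case hi =>
        intro a ha
        rw [Finset.mem_filter, Fl, Finset.mem_filter, Fintype.mem_piFinset] at ha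
        obtain ⟨⟨hpi, hmap⟩, hlast⟩ := ha
        have hmap2 : Multiset.map (fun j : Fin l => a j.castSucc) Finset.univ.val = p.erase v := by
          rw [map_univ_succ, hlast] at hmap
          rw [← hmap, Multiset.erase_cons_head]
        rw [Fl, Finset.mem_filter, Fintype.mem_piFinset]
        refine ⟨fun j => ?_, hmap2⟩
        rw [Multiset.mem_toFinset, ← hmap2]
        exact Multiset.mem_map.2 ⟨j, Finset.mem_univ_val _, rfl⟩
      case hj =>
        intro b hb
        rw [Fl, Finset.mem_filter, Fintype.mem_piFinset] at hb
        obtain ⟨hpi, hmap⟩ := hb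
        have hmap2 : Multiset.map (Fin.snoc b v : Fin (l+1) → ℕ) Finset.univ.val = p := by
          rw [map_univ_succ]
          have h1 : (Fin.snoc b v : Fin (l+1) → ℕ) (Fin.last l) = v := Fin.snoc_last _ _
          have h2 : (fun j : Fin l => (Fin.snoc b v : Fin (l+1) → ℕ) j.castSucc) = b := by
            funext j; exact Fin.snoc_castSucc _ _ _
          rw [h1, h2, hmap, Multiset.cons_erase hvp]
        rw [Finset.mem_filter, Fl, Finset.mem_filter, Fintype.mem_piFinset]
        refine ⟨⟨fun j => ?_, hmap2⟩, Fin.snoc_last _ _⟩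
        show (Fin.snoc b v : Fin (l+1) → ℕ) j ∈ p.toFinset
        rw [Multiset.mem_toFinset, ← hmap2]
        exact Multiset.mem_map.2 ⟨j, Finset.mem_univ_val _, rfl⟩
      case left =>
        intro a ha
        rw [Finset.mem_filter] at ha
        have hlast := ha.2
        funext j
        rcases Fin.eq_castSucc_or_eq_last j with ⟨i, rfl⟩ | rfl
        · exact Fin.snoc_castSucc _ _ i
        · simp only [Fin.snoc_last]; exact hlast.symm
      case right =>
        intro b _
        funext j
        exact Fin.snoc_castSucc _ _ _
    rw [hfib, Finset.sum_congr rfl hstep, Finset.sum_mul]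
    have hterm : ∀ v ∈ p.toFinset,
        #(Fl l (p.erase v)) * ∏ i ∈ p.toFinset, (p.count i).factorial
          = p.count v * l.factorial := by
      intro v hv
      have hvp := Multiset.mem_toFinset.1 hv
      have hq : p = v ::ₘ p.erase v := (Multiset.cons_erase hvp).symm
      have hprod : ∏ i ∈ p.toFinset, (p.count i).factorial
          = ((p.erase v).count v + 1) *
            ∏ i ∈ (p.erase v).toFinset, ((p.erase v).count i).factorial := by
        conv_lhs => rw [hq]
        exact prod_count_fact_cons v (p.erase v)
      have hcard : Multiset.card (p.erase v) = l := by
        rw [Multiset.card_erase_of_mem hvp, hp]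
        rfl
      have hcnt : (p.erase v).count v + 1 = p.count v := by
        have h1 : 1 ≤ p.count v := Multiset.one_le_count_iff_mem.2 hvp
        rw [Multiset.count_erase_self]
        exact Nat.succ_pred_eq_of_pos h1
      calc #(Fl l (p.erase v)) * ∏ i ∈ p.toFinset, (p.count i).factorial
          = ((p.erase v).count v + 1) * (#(Fl l (p.erase v)) *
              ∏ i ∈ (p.erase v).toFinset, ((p.erase v).count i).factorial) := by
            rw [hprod]; ring
        _ = p.count v * l.factorial := by rw [ih _ hcard, hcnt]
    rw [Finset.sum_congr rfl hterm, ← Finset.sum_mul, Multiset.toFinset_sum_count_eq, hp,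
      Nat.factorial_succ]

lemma multiset_filter_map_prod (f : ℕ → ℕ) (hf : f 0 = 1) (s : Multiset ℕ) :
    ((s.filter (· ≠ 0)).map f).prod = (s.map f).prod := by
  conv_rhs => rw [← Multiset.filter_add_not (· ≠ 0) s]
  rw [Multiset.map_add, Multiset.prod_add]
  have h1 : ((s.filter (fun x => ¬ x ≠ 0)).map f).prod = 1 := by
    apply Multiset.prod_eq_one
    intro x hx
    obtain ⟨y, hy, rfl⟩ := Multiset.mem_map.1 hx
    have hy0 : y = 0 := by simpa using Multiset.of_mem_filter hy
    rw [hy0, hf]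
  rw [h1, mul_one]

def toPartA (m k : ℕ) (α : Fin k → ℕ) : Nat.Partition m :=
  if h : ∑ i, α i = m then
    { parts := Multiset.filter (· ≠ 0) (Multiset.map α Finset.univ.val)
      parts_pos := fun {i} hx => Nat.pos_of_ne_zero (Multiset.of_mem_filter (a := i) hx)
      parts_sum := by
        have h4 : (Multiset.filter (fun x => ¬ x ≠ 0) (Multiset.map α Finset.univ.val)).sum = 0 :=
          Multiset.sum_eq_zero (fun x hx => by simpa using Multiset.of_mem_filter hx)
        have h3 := congrArg Multiset.sum
          (Multiset.filter_add_not (fun x => x ≠ 0) (Multiset.map α Finset.univ.val))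
        rw [Multiset.sum_add, h4, add_zero] at h3
        rw [h3, ← Finset.sum_eq_multiset_sum]
        exact h }
  else
    { parts := Multiset.replicate m 1
      parts_pos := fun hx => by rw [Multiset.eq_of_mem_replicate hx]; norm_num
      parts_sum := by simp }

lemma rhs_eq (m k : ℕ) (μ : Fin k → ℝ) :
    ∑ q : Nat.Partition m,
        ((Nat.factorial m : ℝ) / (q.parts.map fun a => Nat.factorial a).prod) *
          ((q.parts.map fun a => oddDoubleFac a).prod : ℝ) * msym k q μ
    = ∑ α ∈ Finset.Nat.antidiagonalTuple k m,
        ((Nat.factorial m : ℝ) / ∏ i, ((α i).factorial : ℝ)) *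
          (∏ i, (oddDoubleFac (α i) : ℝ)) * ∏ i, μ i ^ α i := by
  have hcond : ∀ (q : Nat.Partition m), ∀ α ∈ Finset.Nat.antidiagonalTuple k m,
      (Multiset.filter (· ≠ 0) (Multiset.map α (Finset.univ : Finset (Fin k)).val) = q.parts)
        ↔ toPartA m k α = q := by
    intro q α hα
    rw [Finset.Nat.mem_antidiagonalTuple] at hα
    constructor
    · intro h
      apply Nat.Partition.ext
      rw [toPartA, dif_pos hα]
      exact h
    · intro h
      rw [← h, toPartA, dif_pos hα]
  calc ∑ q : Nat.Partition m,
        ((Nat.factorial m : ℝ) / (q.parts.map fun a => Nat.factorial a).prod) *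
          ((q.parts.map fun a => oddDoubleFac a).prod : ℝ) * msym k q μ
      = ∑ q : Nat.Partition m, ∑ α ∈ (Finset.Nat.antidiagonalTuple k m).filter
            (fun α => toPartA m k α = q),
          ((Nat.factorial m : ℝ) / ((toPartA m k α).parts.map fun a => Nat.factorial a).prod) *
          (((toPartA m k α).parts.map fun a => oddDoubleFac a).prod : ℝ) * ∏ i, μ i ^ α i := by
        apply Finset.sum_congr rfl
        intro q _
        rw [msym, Finset.mul_sum, Finset.sum_congr (Finset.filter_congr (hcond q)) (fun α hα => ?_)]
        rw [Finset.mem_filter] at hα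
        rw [hα.2]
    _ = ∑ α ∈ Finset.Nat.antidiagonalTuple k m,
          ((Nat.factorial m : ℝ) / ((toPartA m k α).parts.map fun a => Nat.factorial a).prod) *
          (((toPartA m k α).parts.map fun a => oddDoubleFac a).prod : ℝ) * ∏ i, μ i ^ α i :=
        Finset.sum_fiberwise _ _ _
    _ = _ := by
        apply Finset.sum_congr rfl
        intro α hα
        rw [Finset.Nat.mem_antidiagonalTuple] at hα
        have hparts : (toPartA m k α).parts
            = Multiset.filter (· ≠ 0) (Multiset.map α Finset.univ.val) := by
          rw [toPartA, dif_pos hα]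
        have h1 : ((toPartA m k α).parts.map fun a => Nat.factorial a).prod
            = ∏ i, (α i).factorial := by
          rw [hparts, multiset_filter_map_prod _ rfl, Multiset.map_map,
            ← Finset.prod_eq_multiset_prod]
          rfl
        have h2 : ((toPartA m k α).parts.map fun a => oddDoubleFac a).prod
            = ∏ i, oddDoubleFac (α i) := by
          rw [hparts, multiset_filter_map_prod _ rfl, Multiset.map_map,
            ← Finset.prod_eq_multiset_prod]
          rfl
        rw [h1, h2]
        push_cast
        ring

lemma mono_prod {k l : ℕ} (μ : Fin k → ℝ) (S : Fin l → Finset (Fin k)) :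
    ∏ j, ∏ i ∈ S j, μ i = ∏ i, μ i ^ #(Finset.univ.filter fun j => i ∈ S j) := by
  have h1 : ∀ j, ∏ i ∈ S j, μ i = ∏ i, (if i ∈ S j then μ i else 1) := by
    intro j
    rw [← Finset.prod_filter]
    congr 1
    ext i; simp
  rw [Finset.prod_congr rfl (fun j _ => h1 j), Finset.prod_comm]
  apply Finset.prod_congr rfl
  intro i _
  rw [Finset.prod_ite, Finset.prod_const, Finset.prod_const_one, mul_one]

lemma tuples_to_alpha (m k l : ℕ) (μ : Fin k → ℝ) :
    ∑ a ∈ (Finset.Nat.antidiagonalTuple l m).filter (fun a => ∀ j, 0 < a j),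
        ∏ j, esym k (a j) μ
    = ∑ α ∈ Finset.Nat.antidiagonalTuple k m, (Ncnt k l α : ℝ) * ∏ i, μ i ^ α i := by
  have step1 : ∑ a ∈ (Finset.Nat.antidiagonalTuple l m).filter (fun a => ∀ j, 0 < a j),
      ∏ j, esym k (a j) μ
      = ∑ S ∈ Finset.univ.filter (fun S : Fin l → Finset (Fin k) =>
          (∀ j, S j ≠ ∅) ∧ ∑ j, #(S j) = m), ∏ j, ∏ i ∈ S j, μ i := by
    have hexp : ∀ a : Fin l → ℕ, ∏ j, esym k (a j) μ
        = ∑ S ∈ Fintype.piFinset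
            (fun j => Finset.powersetCard (a j) (Finset.univ : Finset (Fin k))),
            ∏ j, ∏ i ∈ S j, μ i := by
      intro a
      simp only [esym]
      exact Finset.prod_univ_sum _ _
    rw [Finset.sum_congr rfl (fun a _ => hexp a), Finset.sum_sigma']
    refine Finset.sum_nbij' (i := fun x => x.2) (j := fun S => ⟨fun j => #(S j), S⟩)
      ?hi ?hj ?left ?right ?h
    case hi =>
      rintro ⟨a, S⟩ hx
      rw [Finset.mem_sigma, Finset.mem_filter, Finset.Nat.mem_antidiagonalTuple,
        Fintype.mem_piFinset] at hx
      obtain ⟨⟨hsum, hpos⟩, hpi⟩ := hx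
      have hc : ∀ j, #(S j) = a j := fun j => (Finset.mem_powersetCard.1 (hpi j)).2
      rw [Finset.mem_filter]
      refine ⟨Finset.mem_univ _, fun j => ?_, by rw [Finset.sum_congr rfl fun j _ => hc j]; exact hsum⟩
      rw [← Finset.nonempty_iff_ne_empty, ← Finset.card_pos, hc]
      exact hpos j
    case hj =>
      intro S hS
      rw [Finset.mem_filter] at hS
      obtain ⟨-, hne, hsum⟩ := hS
      rw [Finset.mem_sigma, Finset.mem_filter, Finset.Nat.mem_antidiagonalTuple,
        Fintype.mem_piFinset]
      refine ⟨⟨hsum, fun j => ?_⟩, fun j => ?_⟩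
      · rw [Finset.card_pos, Finset.nonempty_iff_ne_empty]
        exact hne j
      · rw [Finset.mem_powersetCard]
        exact ⟨Finset.subset_univ _, rfl⟩
    case left =>
      rintro ⟨a, S⟩ hx
      rw [Finset.mem_sigma, Fintype.mem_piFinset] at hx
      have hc : ∀ j, #(S j) = a j := fun j => (Finset.mem_powersetCard.1 (hx.2 j)).2
      have : (fun j => #(S j)) = a := funext hc
      simp only []
      congr 1
    case right =>
      intro S _
      rfl
    case h =>
      intro x _
      rfl
  rw [step1]
  have hmaps : ∀ S ∈ Finset.univ.filter (fun S : Fin l → Finset (Fin k) =>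
      (∀ j, S j ≠ ∅) ∧ ∑ j, #(S j) = m),
      (fun i => #(Finset.univ.filter fun j => i ∈ S j)) ∈ Finset.Nat.antidiagonalTuple k m := by
    intro S hS
    rw [Finset.mem_filter] at hS
    rw [Finset.Nat.mem_antidiagonalTuple]
    rw [sum_card_filter_mem]
    exact hS.2.2
  rw [← Finset.sum_fiberwise_of_maps_to hmaps]
  apply Finset.sum_congr rfl
  intro α hα
  rw [Finset.Nat.mem_antidiagonalTuple] at hα
  have hset : (Finset.univ.filter (fun S : Fin l → Finset (Fin k) =>
      (∀ j, S j ≠ ∅) ∧ ∑ j, #(S j) = m)).filter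
        (fun S => (fun i => #(Finset.univ.filter fun j => i ∈ S j)) = α) = Tup k l α := by
    rw [Tup]
    ext S
    simp only [Finset.mem_filter, Finset.mem_univ, true_and]
    constructor
    · rintro ⟨⟨hne, -⟩, hcnt⟩
      exact ⟨hne, fun i => congrFun hcnt i⟩
    · rintro ⟨hne, hcnt⟩
      refine ⟨⟨hne, ?_⟩, funext hcnt⟩
      rw [← sum_card_filter_mem, Finset.sum_congr rfl fun i _ => hcnt i]
      exact hα
  rw [hset]
  have hterm : ∀ S ∈ Tup k l α, ∏ j, ∏ i ∈ S j, μ i = ∏ i, μ i ^ α i := by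
    intro S hS
    rw [Tup, Finset.mem_filter] at hS
    rw [mono_prod]
    exact Finset.prod_congr rfl fun i _ => by rw [hS.2.2 i]
  rw [Finset.sum_congr rfl hterm, Finset.sum_const, Ncnt, nsmul_eq_mul]

def toPartT (m l : ℕ) (a : Fin l → ℕ) : Nat.Partition m :=
  if h : (∀ j, 0 < a j) ∧ ∑ j, a j = m then
    { parts := Multiset.map a Finset.univ.val
      parts_pos := fun {i} hx => by
        obtain ⟨j, -, rfl⟩ := Multiset.mem_map.1 hx
        exact h.1 j
      parts_sum := by rw [← Finset.sum_eq_multiset_sum]; exact h.2 }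
  else
    { parts := Multiset.replicate m 1
      parts_pos := fun hx => by rw [Multiset.eq_of_mem_replicate hx]; norm_num
      parts_sum := by simp }

lemma parts_card_le (m : ℕ) (p : Nat.Partition m) : Multiset.card p.parts ≤ m := by
  have h := Multiset.card_nsmul_le_sum (s := p.parts) (a := 1) (fun x hx => p.parts_pos hx)
  simpa [p.parts_sum] using h

lemma fiber_eq (m l : ℕ) (p : Nat.Partition m) :
    ((Finset.Nat.antidiagonalTuple l m).filter (fun a => ∀ j, 0 < a j)).filter
        (fun a => toPartT m l a = p)
      = if Multiset.card p.parts = l then Fl l p.parts else ∅ := by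
  ext a
  rw [Finset.mem_filter, Finset.mem_filter, Finset.Nat.mem_antidiagonalTuple]
  constructor
  · rintro ⟨⟨hsum, hpos⟩, hp⟩
    have hparts : p.parts = Multiset.map a Finset.univ.val := by
      rw [← hp, toPartT, dif_pos ⟨hpos, hsum⟩]
    have hcard : Multiset.card p.parts = l := by rw [hparts]; simp
    rw [if_pos hcard, Fl, Finset.mem_filter, Fintype.mem_piFinset]
    refine ⟨fun j => ?_, hparts.symm⟩
    rw [Multiset.mem_toFinset, hparts]
    exact Multiset.mem_map.2 ⟨j, Finset.mem_univ_val _, rfl⟩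
  · intro ha
    by_cases hcard : Multiset.card p.parts = l
    swap
    · rw [if_neg hcard] at ha; simp at ha
    rw [if_pos hcard, Fl, Finset.mem_filter, Fintype.mem_piFinset] at ha
    obtain ⟨-, hmap⟩ := ha
    have hpos : ∀ j, 0 < a j := fun j => p.parts_pos
      (by rw [← hmap]; exact Multiset.mem_map.2 ⟨j, Finset.mem_univ_val _, rfl⟩)
    have hsum : ∑ j, a j = m := by
      rw [Finset.sum_eq_multiset_sum, hmap, p.parts_sum]
    refine ⟨⟨hsum, hpos⟩, ?_⟩
    apply Nat.Partition.ext
    rw [toPartT, dif_pos ⟨hpos, hsum⟩]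
    exact hmap

lemma lhs_eq (m k : ℕ) (μ : Fin k → ℝ) :
    ∑ p : Nat.Partition m,
      ((oddDoubleFac (Multiset.card p.parts) : ℝ) / (-2) ^ (Multiset.card p.parts)) *
        (1 / multFact p) * (p.parts.map fun a => esym k a μ).prod
    = ∑ l ∈ Finset.range (m+1),
        ((oddDoubleFac l : ℝ) / ((-2) ^ l * (Nat.factorial l : ℝ))) *
          ∑ a ∈ (Finset.Nat.antidiagonalTuple l m).filter (fun a => ∀ j, 0 < a j),
            ∏ j, esym k (a j) μ := by
  have inner : ∀ (l : ℕ) (p : Nat.Partition m),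
      ∑ a ∈ ((Finset.Nat.antidiagonalTuple l m).filter (fun a => ∀ j, 0 < a j)).filter
          (fun a => toPartT m l a = p), ∏ j, esym k (a j) μ
      = (if Multiset.card p.parts = l then (#(Fl l p.parts) : ℝ) else 0) *
          (p.parts.map fun x => esym k x μ).prod := by
    intro l p
    rw [fiber_eq]
    by_cases hcard : Multiset.card p.parts = l
    · rw [if_pos hcard, if_pos hcard]
      have hterm : ∀ a ∈ Fl l p.parts,
          ∏ j, esym k (a j) μ = (p.parts.map fun x => esym k x μ).prod := by
        intro a ha
        rw [Fl, Finset.mem_filter] at ha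
        rw [← ha.2, Multiset.map_map, ← Finset.prod_eq_multiset_prod]
        rfl
      rw [Finset.sum_congr rfl hterm, Finset.sum_const, nsmul_eq_mul]
    · rw [if_neg hcard, if_neg hcard, zero_mul]
      simp
  symm
  calc ∑ l ∈ Finset.range (m+1),
        ((oddDoubleFac l : ℝ) / ((-2) ^ l * (Nat.factorial l : ℝ))) *
          ∑ a ∈ (Finset.Nat.antidiagonalTuple l m).filter (fun a => ∀ j, 0 < a j),
            ∏ j, esym k (a j) μ
      = ∑ l ∈ Finset.range (m+1), ∑ p : Nat.Partition m,
          ((oddDoubleFac l : ℝ) / ((-2) ^ l * (Nat.factorial l : ℝ))) *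
            ((if Multiset.card p.parts = l then (#(Fl l p.parts) : ℝ) else 0) *
              (p.parts.map fun x => esym k x μ).prod) := by
        refine Finset.sum_congr rfl fun l _ => ?_
        rw [← Finset.sum_fiberwise ((Finset.Nat.antidiagonalTuple l m).filter
            (fun a => ∀ j, 0 < a j)) (toPartT m l) (fun a => ∏ j, esym k (a j) μ),
          Finset.mul_sum]
        exact Finset.sum_congr rfl fun p _ => by rw [inner l p]
    _ = ∑ p : Nat.Partition m, ∑ l ∈ Finset.range (m+1),
          ((oddDoubleFac l : ℝ) / ((-2) ^ l * (Nat.factorial l : ℝ))) *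
            ((if Multiset.card p.parts = l then (#(Fl l p.parts) : ℝ) else 0) *
              (p.parts.map fun x => esym k x μ).prod) := Finset.sum_comm
    _ = _ := by
        refine Finset.sum_congr rfl fun p _ => ?_
        have hstep : ∀ l ∈ Finset.range (m+1),
            ((oddDoubleFac l : ℝ) / ((-2) ^ l * (Nat.factorial l : ℝ))) *
              ((if Multiset.card p.parts = l then (#(Fl l p.parts) : ℝ) else 0) *
                (p.parts.map fun x => esym k x μ).prod)
            = if Multiset.card p.parts = l then
                ((oddDoubleFac l : ℝ) / ((-2) ^ l * (Nat.factorial l : ℝ))) *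
                  ((#(Fl l p.parts) : ℝ) * (p.parts.map fun x => esym k x μ).prod) else 0 := by
          intro l _
          by_cases hc : Multiset.card p.parts = l
          · rw [if_pos hc, if_pos hc]
          · rw [if_neg hc, if_neg hc, zero_mul, mul_zero]
        rw [Finset.sum_congr rfl hstep, Finset.sum_ite_eq]
        rw [if_pos (Finset.mem_range.2 (Nat.lt_succ_of_le (parts_card_le m p)))]
        have hFl := Fl_card (Multiset.card p.parts) p.parts rfl
        have hmf : (0 : ℝ) < multFact p := by
          rw [multFact]
          push_cast
          exact Finset.prod_pos fun i _ => by exact_mod_cast (p.parts.count i).factorial_pos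
        have h1 : (#(Fl (Multiset.card p.parts) p.parts) : ℝ)
            = ((Multiset.card p.parts).factorial : ℝ) / multFact p := by
          rw [eq_div_iff (ne_of_gt hmf)]
          exact_mod_cast congrArg (Nat.cast : ℕ → ℝ) hFl
        rw [h1]
        have hfac : ((Multiset.card p.parts).factorial : ℝ) ≠ 0 := by
          exact_mod_cast (Multiset.card p.parts).factorial_ne_zero
        field_simp

theorem stmt8 (m k : ℕ) (hm : 0 < m) (hk : 0 < k) (μ : Fin k → ℝ) :
    ∑ p : Nat.Partition m,
      ((oddDoubleFac (Multiset.card p.parts) : ℝ) / (-2) ^ (Multiset.card p.parts)) *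
        (1 / multFact p) * (p.parts.map fun a => esym k a μ).prod
    = (1 / ((-2) ^ m * Nat.factorial m)) *
        ∑ q : Nat.Partition m,
          ((Nat.factorial m : ℝ) / (q.parts.map fun a => Nat.factorial a).prod) *
            ((q.parts.map fun a => oddDoubleFac a).prod : ℝ) * msym k q μ := by
  have hneg2 : ∀ n : ℕ, ((-2 : ℝ) ^ n) ≠ 0 := fun n => pow_ne_zero n (by norm_num)
  calc ∑ p : Nat.Partition m,
      ((oddDoubleFac (Multiset.card p.parts) : ℝ) / (-2) ^ (Multiset.card p.parts)) *
        (1 / multFact p) * (p.parts.map fun a => esym k a μ).prod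
      = ∑ l ∈ Finset.range (m+1),
          ((oddDoubleFac l : ℝ) / ((-2) ^ l * (Nat.factorial l : ℝ))) *
            ∑ α ∈ Finset.Nat.antidiagonalTuple k m, (Ncnt k l α : ℝ) * ∏ i, μ i ^ α i := by
        rw [lhs_eq]
        exact Finset.sum_congr rfl fun l _ => by rw [tuples_to_alpha]
    _ = ∑ α ∈ Finset.Nat.antidiagonalTuple k m, ∑ l ∈ Finset.range (m+1),
          ((oddDoubleFac l : ℝ) / ((-2) ^ l * (Nat.factorial l : ℝ))) *
            ((Ncnt k l α : ℝ) * ∏ i, μ i ^ α i) := by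
        rw [Finset.sum_congr rfl fun l (_ : l ∈ Finset.range (m+1)) => Finset.mul_sum _ _ _]
        exact Finset.sum_comm
    _ = ∑ α ∈ Finset.Nat.antidiagonalTuple k m,
          (∏ i, fallFac (-1/2) (α i) / ((α i).factorial : ℝ)) * ∏ i, μ i ^ α i := by
        refine Finset.sum_congr rfl fun α hα => ?_
        rw [Finset.Nat.mem_antidiagonalTuple] at hα
        rw [← newton α hα, Finset.sum_mul]
        refine Finset.sum_congr rfl fun l _ => ?_
        rw [oddDoubleFac_cast]
        have hl : ((Nat.factorial l : ℝ)) ≠ 0 := by exact_mod_cast l.factorial_ne_zero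
        field_simp
    _ = (1 / ((-2) ^ m * Nat.factorial m)) *
        ∑ q : Nat.Partition m,
          ((Nat.factorial m : ℝ) / (q.parts.map fun a => Nat.factorial a).prod) *
            ((q.parts.map fun a => oddDoubleFac a).prod : ℝ) * msym k q μ := by
        rw [rhs_eq, Finset.mul_sum]
        refine Finset.sum_congr rfl fun α hα => ?_
        rw [Finset.Nat.mem_antidiagonalTuple] at hα
        have hodf : (∏ i, (oddDoubleFac (α i) : ℝ))
            = (∏ i, fallFac (-1/2) (α i)) * (-2) ^ m := by
          rw [← hα, ← Finset.prod_pow_eq_pow_sum, ← Finset.prod_mul_distrib]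
          exact Finset.prod_congr rfl fun i _ => oddDoubleFac_cast (α i)
        rw [hodf]
        have hfacprod : (∏ i, ((α i).factorial : ℝ)) ≠ 0 := by
          apply Finset.prod_ne_zero_iff.2
          intro i _
          exact_mod_cast (α i).factorial_ne_zero
        have hmfac : ((Nat.factorial m : ℝ)) ≠ 0 := by exact_mod_cast m.factorial_ne_zero
        rw [Finset.prod_div_distrib]
        field_simp
end

section
/- Let m and k be positive integers, let μ_1, …, μ_k be real numbers, and let Z_1, …, Z_k be independent standard Gaussian random variables. Then E[(Z_1² μ_1 + ⋯ + Z_k² μ_k)^m] = ∑_{q ⊢ m} (m choose q) · (2q−1)!! · m_q(μ_1, …, μ_k), where (m choose q) = m!/∏_i q_i! is the multinomial coefficient, (2q−1)!! = ∏_i (2q_i − 1)!!, and the sum ranges over all integer partitions q of m. -/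
open Finset MeasureTheory ProbabilityTheory Real

lemma oddDoubleFac_succ (n : ℕ) : oddDoubleFac (n+1) = oddDoubleFac n * (2*n+1) :=
  Finset.prod_range_succ _ _

lemma Gamma_nat_add_half (n : ℕ) :
    Real.Gamma ((n : ℝ) + 1/2) = (oddDoubleFac n : ℝ) / 2 ^ n * Real.sqrt π := by
  induction n with
  | zero => simpa [oddDoubleFac, one_div] using Real.Gamma_one_half_eq
  | succ n ih =>
    have h : ((n+1 : ℕ) : ℝ) + 1/2 = ((n:ℝ) + 1/2) + 1 := by push_cast; ring
    rw [h, Real.Gamma_add_one (by positivity), ih, oddDoubleFac_succ]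
    push_cast
    field_simp
    ring

lemma integral_pow_exp (n : ℕ) :
    ∫ x : ℝ, x ^ (2*n) * Real.exp (-(1/2) * x ^ 2)
      = Real.sqrt (2*π) * (oddDoubleFac n : ℝ) := by
  have habs : ∀ x : ℝ, |x| ^ (2*n) * Real.exp (-(1/2) * |x| ^ 2)
      = x ^ (2*n) * Real.exp (-(1/2) * x ^ 2) := by
    intro x; rw [pow_mul, pow_mul, sq_abs]
  have h0 : ∫ x : ℝ, x ^ (2*n) * Real.exp (-(1/2) * x ^ 2)
      = 2 * ∫ x in Set.Ioi (0:ℝ), x ^ (2*n) * Real.exp (-(1/2) * x ^ 2) := by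
    rw [← integral_comp_abs (f := fun x => x ^ (2*n) * Real.exp (-(1/2) * x ^ 2))]
    simp_rw [habs]
  have h1 : ∫ x in Set.Ioi (0:ℝ), x ^ (2*n) * Real.exp (-(1/2) * x ^ 2)
      = (1/2 : ℝ) ^ (-(((2*n : ℕ) : ℝ) + 1) / 2) * (1 / 2)
          * Real.Gamma ((((2*n : ℕ) : ℝ) + 1) / 2) := by
    rw [← integral_rpow_mul_exp_neg_mul_rpow (p := 2) (q := ((2*n : ℕ) : ℝ)) (b := 1/2)
      two_pos (lt_of_lt_of_le neg_one_lt_zero (by positivity)) (by norm_num)]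
    refine setIntegral_congr_fun measurableSet_Ioi fun x hx => ?_
    rw [Real.rpow_natCast, Real.rpow_two]
  have h2 : ((((2*n : ℕ) : ℝ) + 1) / 2) = (n : ℝ) + 1/2 := by push_cast; ring
  have h3 : (1/2 : ℝ) ^ (-(((2*n : ℕ) : ℝ) + 1) / 2) = 2 ^ (n : ℕ) * Real.sqrt 2 := by
    rw [one_div, ← Real.rpow_neg_one (2:ℝ), ← Real.rpow_natCast (2:ℝ) n,
      ← Real.rpow_mul (by norm_num), Real.sqrt_eq_rpow, ← Real.rpow_add two_pos]
    congr 1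
    push_cast; ring
  rw [h0, h1, h2, h3, _root_.Gamma_nat_add_half, Real.sqrt_mul (by norm_num) π]
  have h4 : (2:ℝ) ^ n ≠ 0 := by positivity
  field_simp

noncomputable def stdPDF (x : ℝ) : ℝ := (Real.sqrt (2*π))⁻¹ * Real.exp (-(1/2) * x ^ 2)

lemma gaussianPDFReal_eq_stdPDF : gaussianPDFReal 0 1 = stdPDF := by
  funext x
  simp only [gaussianPDFReal, stdPDF, NNReal.coe_one, mul_one, sub_zero]
  congr 1
  ring

lemma stdPDF_nonneg (x : ℝ) : 0 ≤ stdPDF x := by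
  unfold stdPDF; positivity

lemma measurable_stdPDF : Measurable stdPDF := by
  rw [← gaussianPDFReal_eq_stdPDF]; exact measurable_gaussianPDFReal 0 1

lemma gaussianReal_eq : gaussianReal 0 1 =
    (volume : Measure ℝ).withDensity (fun x => ((stdPDF x).toNNReal : ENNReal)) := by
  rw [gaussianReal_of_var_ne_zero 0 one_ne_zero]
  congr 1
  funext x
  rw [gaussianPDF, gaussianPDFReal_eq_stdPDF]
  rfl

lemma gauss_integral_eq (g : ℝ → ℝ) :
    ∫ x, g x ∂(gaussianReal 0 1) = ∫ x, stdPDF x * g x := by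
  rw [gaussianReal_eq, integral_withDensity_eq_integral_smul
    (measurable_stdPDF.real_toNNReal) g]
  congr 1
  funext x
  rw [NNReal.smul_def, smul_eq_mul, Real.coe_toNNReal _ (stdPDF_nonneg x)]

lemma gauss_integrable_iff (g : ℝ → ℝ) :
    Integrable g (gaussianReal 0 1) ↔ Integrable (fun x => stdPDF x * g x) := by
  rw [gaussianReal_eq, integrable_withDensity_iff_integrable_smul
    (measurable_stdPDF.real_toNNReal)]
  constructor <;> intro h <;> refine h.congr (Filter.Eventually.of_forall fun x => ?_) <;>
    simp only [NNReal.smul_def, smul_eq_mul, Real.coe_toNNReal _ (stdPDF_nonneg x)]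

lemma gauss_moment (n : ℕ) :
    ∫ x, x ^ (2*n) ∂(gaussianReal 0 1) = (oddDoubleFac n : ℝ) := by
  rw [gauss_integral_eq]
  have h : (fun x : ℝ => stdPDF x * x ^ (2*n))
      = fun x : ℝ => (Real.sqrt (2*π))⁻¹ * (x ^ (2*n) * Real.exp (-(1/2) * x ^ 2)) := by
    funext x; unfold stdPDF; ring
  rw [h, integral_const_mul, integral_pow_exp, ← mul_assoc,
    inv_mul_cancel₀ (by positivity), one_mul]

lemma gauss_int_pow (n : ℕ) : Integrable (fun x : ℝ => x ^ (2*n)) (gaussianReal 0 1) := by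
  rw [gauss_integrable_iff]
  have base := integrable_rpow_mul_exp_neg_mul_sq (b := 1/2) (by norm_num)
    (s := ((2*n : ℕ) : ℝ)) (lt_of_lt_of_le neg_one_lt_zero (by positivity))
  simp_rw [Real.rpow_natCast] at base
  have hfe : (fun x : ℝ => (Real.sqrt (2*π))⁻¹ * (x ^ (2*n) * Real.exp (-(1/2) * x^2)))
      = fun x => stdPDF x * x ^ (2*n) := by
    funext x; unfold stdPDF; ring
  exact hfe ▸ base.const_mul _

lemma indep_prod_integral {Ω : Type*} [MeasureSpace Ω] [IsProbabilityMeasure (ℙ : Measure Ω)]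
    {ι : Type*} {W : ι → Ω → ℝ} (hindep : iIndepFun W ℙ)
    (hmeas : ∀ i, Measurable (W i)) (hint : ∀ i, Integrable (W i) ℙ) (s : Finset ι) :
    Integrable (fun ω => ∏ i ∈ s, W i ω) ℙ ∧
      ∫ ω, ∏ i ∈ s, W i ω ∂ℙ = ∏ i ∈ s, ∫ ω, W i ω ∂ℙ := by
  classical
  induction s using Finset.induction_on with
  | empty => simp
  | @insert a s ha ih =>
    have hip : IndepFun (W a) (fun ω => ∏ j ∈ s, W j ω) ℙ := by
      have h := (hindep.indepFun_finsetProd_of_notMem hmeas ha).symm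
      have he : (∏ j ∈ s, W j) = fun ω => ∏ j ∈ s, W j ω := by
        funext ω; simp [Finset.prod_apply]
      rwa [he] at h
    have h1 : Integrable (fun ω => W a ω * ∏ j ∈ s, W j ω) ℙ := by
      have := hip.integrable_mul (hint a) ih.1
      exact this.congr (Filter.Eventually.of_forall fun ω => rfl)
    constructor
    · refine h1.congr (Filter.Eventually.of_forall fun ω => ?_)
      simp [Finset.prod_insert ha]
    · have h2 := hip.integral_mul_eq_mul_integral (hint a).1 ih.1.1
      have he2 : ∫ ω, ∏ i ∈ insert a s, W i ω ∂ℙ = ∫ ω, W a ω * ∏ j ∈ s, W j ω ∂ℙ := by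
        congr 1; funext ω; rw [Finset.prod_insert ha]
      rw [he2, Finset.prod_insert ha, ← ih.2, ← h2]
      congr 1

def partOf {k m : ℕ} (α : Fin k → ℕ) : Nat.Partition m :=
  if h : ∑ i, α i = m then
    { parts := Multiset.filter (· ≠ 0) (Multiset.map α (Finset.univ : Finset (Fin k)).val)
      parts_pos := fun {i} hi =>
        Nat.pos_of_ne_zero (Multiset.of_mem_filter (p := fun x => x ≠ 0) hi)
      parts_sum := by
        have h2 : (Multiset.filter (· ≠ 0) (Multiset.map α univ.val)).sum
            + (Multiset.filter (fun x => ¬ x ≠ 0) (Multiset.map α univ.val)).sum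
            = (Multiset.map α (univ : Finset (Fin k)).val).sum := by
          rw [← Multiset.sum_add, Multiset.filter_add_not]
        have h3 : (Multiset.filter (fun x => ¬ x ≠ 0) (Multiset.map α univ.val)).sum = 0 :=
          Multiset.sum_eq_zero (fun x hx => by
            have := Multiset.of_mem_filter hx; simpa using this)
        have h4 : (Multiset.map α (univ : Finset (Fin k)).val).sum = ∑ i, α i :=
          (Finset.sum_eq_multiset_sum _ _).symm
        omega }
  else Nat.Partition.indiscrete m

lemma partOf_eq {k m : ℕ} (α : Fin k → ℕ) (h : ∑ i, α i = m) {q : Nat.Partition m} :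
    partOf α = q ↔ Multiset.filter (· ≠ 0) (Multiset.map α (Finset.univ : Finset (Fin k)).val)
      = q.parts := by
  unfold partOf
  rw [dif_pos h]
  constructor
  · intro hq; rw [← hq]
  · intro hq; exact Nat.Partition.ext hq

lemma prod_map_eq_filter (f : ℕ → ℕ) (hf : f 0 = 1) (M : Multiset ℕ) :
    (M.map f).prod = ((M.filter (· ≠ 0)).map f).prod := by
  conv_lhs => rw [← Multiset.filter_add_not (fun x => x ≠ 0) M]
  rw [Multiset.map_add, Multiset.prod_add]
  have h1 : ((M.filter (fun x => ¬ x ≠ 0)).map f).prod = 1 :=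
    Multiset.prod_eq_one (fun x hx => by
      obtain ⟨y, hy, rfl⟩ := Multiset.mem_map.1 hx
      have hy0 := Multiset.of_mem_filter hy
      simp only [ne_eq, not_not] at hy0
      rw [hy0, hf])
  rw [h1, mul_one]

lemma prod_univ_eq_parts {k m : ℕ} (f : ℕ → ℕ) (hf : f 0 = 1) (α : Fin k → ℕ)
    {q : Nat.Partition m}
    (hq : Multiset.filter (· ≠ 0) (Multiset.map α (Finset.univ : Finset (Fin k)).val)
      = q.parts) :
    ∏ i, f (α i) = (q.parts.map f).prod := by
  rw [← hq, ← prod_map_eq_filter f hf, Multiset.map_map, Finset.prod_eq_multiset_prod]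
  rfl

lemma piAntidiag_eq_antidiagonalTuple (k m : ℕ) :
    Finset.piAntidiag (Finset.univ : Finset (Fin k)) m = Finset.Nat.antidiagonalTuple k m := by
  ext α
  rw [Finset.mem_piAntidiag, Finset.Nat.mem_antidiagonalTuple]
  simp

lemma multinomial_cast_eq {k m : ℕ} (α : Fin k → ℕ) (h : ∑ i, α i = m)
    {q : Nat.Partition m}
    (hq : Multiset.filter (· ≠ 0) (Multiset.map α (Finset.univ : Finset (Fin k)).val)
      = q.parts) :
    (Nat.multinomial Finset.univ α : ℝ)
      = (Nat.factorial m : ℝ) / ((q.parts.map fun a => Nat.factorial a).prod : ℕ) := by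
  have hfac : ∏ i, Nat.factorial (α i) = (q.parts.map fun a => Nat.factorial a).prod :=
    prod_univ_eq_parts _ rfl α hq
  have hspec := Nat.multinomial_spec Finset.univ α
  rw [h, hfac] at hspec
  have hne : ((q.parts.map fun a => Nat.factorial a).prod : ℝ) ≠ 0 := by
    have : 0 < (q.parts.map fun a => Nat.factorial a).prod :=
      Multiset.prod_pos (fun x hx => by
        obtain ⟨y, _, rfl⟩ := Multiset.mem_map.1 hx
        exact Nat.factorial_pos y)
    exact_mod_cast this.ne'
  rw [eq_div_iff hne]
  rw [mul_comm] at hspec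
  exact_mod_cast hspec

theorem stmt9 (m k : ℕ) (hm : 0 < m) (hk : 0 < k) (μ : Fin k → ℝ)
    {Ω : Type*} [MeasureSpace Ω] [IsProbabilityMeasure (ℙ : Measure Ω)]
    (Z : Fin k → Ω → ℝ) (hZmeas : ∀ i, Measurable (Z i))
    (hindep : iIndepFun Z ℙ)
    (hZ : ∀ i, Measure.map (Z i) ℙ = gaussianReal 0 1) :
    ∫ ω, (∑ i, (Z i ω) ^ 2 * μ i) ^ m ∂ℙ
    = ∑ q : Nat.Partition m,
        ((Nat.factorial m : ℝ) / (q.parts.map fun a => Nat.factorial a).prod) *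
          ((q.parts.map fun a => oddDoubleFac a).prod : ℝ) * msym k q μ := by
  have hWint : ∀ (i : Fin k) (e : ℕ), Integrable (fun ω => Z i ω ^ (2*e)) ℙ := by
    intro i e
    have hg : Integrable (fun x : ℝ => x ^ (2*e)) (Measure.map (Z i) ℙ) := by
      rw [hZ i]; exact gauss_int_pow e
    have hsm : AEStronglyMeasurable (fun x : ℝ => x ^ (2*e)) (Measure.map (Z i) ℙ) :=
      (measurable_id.pow_const _).aestronglyMeasurable
    rw [integrable_map_measure hsm (hZmeas i).aemeasurable] at hg
    exact hg
  have hWmom : ∀ (i : Fin k) (e : ℕ), ∫ ω, Z i ω ^ (2*e) ∂ℙ = (oddDoubleFac e : ℝ) := by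
    intro i e
    have hsm : AEStronglyMeasurable (fun x : ℝ => x ^ (2*e)) (Measure.map (Z i) ℙ) :=
      (measurable_id.pow_const _).aestronglyMeasurable
    have h : ∫ ω, Z i ω ^ (2*e) ∂ℙ = ∫ x, x ^ (2*e) ∂(Measure.map (Z i) ℙ) :=
      (integral_map (hZmeas i).aemeasurable hsm).symm
    rw [h, hZ i, gauss_moment]
  have hprod : ∀ α : Fin k → ℕ,
      Integrable (fun ω => ∏ i, Z i ω ^ (2 * α i)) ℙ ∧
        ∫ ω, ∏ i, Z i ω ^ (2 * α i) ∂ℙ = ∏ i, (oddDoubleFac (α i) : ℝ) := by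
    intro α
    have hc : iIndepFun (fun i ω => Z i ω ^ (2 * α i)) ℙ :=
      hindep.comp _ (fun i => measurable_id.pow_const (2 * α i))
    have h := indep_prod_integral hc (fun i => (hZmeas i).pow_const _)
      (fun i => hWint i (α i)) Finset.univ
    refine ⟨h.1, ?_⟩
    rw [h.2]
    exact Finset.prod_congr rfl fun i _ => hWmom i (α i)
  have hexp : ∀ ω, (∑ i, Z i ω ^ 2 * μ i) ^ m
      = ∑ α ∈ Finset.piAntidiag (Finset.univ : Finset (Fin k)) m,
          ((Nat.multinomial Finset.univ α : ℝ) * ∏ i, μ i ^ α i)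
          * ∏ i, Z i ω ^ (2 * α i) := by
    intro ω
    rw [Finset.sum_pow_eq_sum_piAntidiag Finset.univ (fun i => Z i ω ^ 2 * μ i) m]
    refine Finset.sum_congr rfl fun α hα => ?_
    simp_rw [mul_pow, ← pow_mul]
    rw [Finset.prod_mul_distrib]
    ring
  calc ∫ ω, (∑ i, Z i ω ^ 2 * μ i) ^ m ∂ℙ
      = ∫ ω, ∑ α ∈ Finset.piAntidiag (Finset.univ : Finset (Fin k)) m,
          ((Nat.multinomial Finset.univ α : ℝ) * ∏ i, μ i ^ α i)
          * ∏ i, Z i ω ^ (2 * α i) ∂ℙ :=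
        integral_congr_ae (Filter.Eventually.of_forall fun ω => hexp ω)
    _ = ∑ α ∈ Finset.piAntidiag (Finset.univ : Finset (Fin k)) m,
          ∫ ω, ((Nat.multinomial Finset.univ α : ℝ) * ∏ i, μ i ^ α i)
          * ∏ i, Z i ω ^ (2 * α i) ∂ℙ :=
        integral_finset_sum _ (fun α _ => (hprod α).1.const_mul _)
    _ = ∑ α ∈ Finset.piAntidiag (Finset.univ : Finset (Fin k)) m,
          ((Nat.multinomial Finset.univ α : ℝ) * ∏ i, (oddDoubleFac (α i) : ℝ))
          * ∏ i, μ i ^ α i := by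
        refine Finset.sum_congr rfl fun α _ => ?_
        rw [integral_const_mul, (hprod α).2]
        ring
    _ = ∑ q : Nat.Partition m,
          ∑ α ∈ (Finset.piAntidiag (Finset.univ : Finset (Fin k)) m).filter
            (fun α => partOf α = q),
          ((Nat.multinomial Finset.univ α : ℝ) * ∏ i, (oddDoubleFac (α i) : ℝ))
          * ∏ i, μ i ^ α i :=
        (Finset.sum_fiberwise_of_maps_to (fun α _ => Finset.mem_univ (partOf α)) _).symm
    _ = ∑ q : Nat.Partition m,
        ((Nat.factorial m : ℝ) / (q.parts.map fun a => Nat.factorial a).prod) *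
          ((q.parts.map fun a => oddDoubleFac a).prod : ℝ) * msym k q μ := by
        refine Finset.sum_congr rfl fun q _ => ?_
        have hfiber : (Finset.piAntidiag (Finset.univ : Finset (Fin k)) m).filter
            (fun α => partOf α = q)
            = (Finset.Nat.antidiagonalTuple k m).filter
              (fun α => Multiset.filter (· ≠ 0)
                (Multiset.map α (Finset.univ : Finset (Fin k)).val) = q.parts) := by
          rw [piAntidiag_eq_antidiagonalTuple]
          refine Finset.filter_congr fun α hα => ?_
          exact partOf_eq α (Finset.Nat.mem_antidiagonalTuple.mp hα)
        rw [hfiber]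
        have hmsym : msym k q μ = ∑ α ∈ (Finset.Nat.antidiagonalTuple k m).filter
              (fun α => Multiset.filter (· ≠ 0)
                (Multiset.map α (Finset.univ : Finset (Fin k)).val) = q.parts),
            ∏ i, μ i ^ α i := rfl
        rw [hmsym, Finset.mul_sum]
        refine Finset.sum_congr rfl fun α hα => ?_
        obtain ⟨hα1, hα2⟩ := Finset.mem_filter.mp hα
        have hsum : ∑ i, α i = m := Finset.Nat.mem_antidiagonalTuple.mp hα1
        have hodf : ∏ i, (oddDoubleFac (α i) : ℝ)
            = ((q.parts.map fun a => oddDoubleFac a).prod : ℕ) := by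
          rw [← prod_univ_eq_parts oddDoubleFac rfl α hα2]
          push_cast
          rfl
        rw [multinomial_cast_eq α hsum hα2, hodf]
end
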